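/- Let R be a finite commutative chain ring with residue field F_q, and t_1(X_1), ..., t_s(X_s) ∈ R[X_i] monic polynomials whose reductions mod the maximal ideal are squarefree over F_q. Then the quotient ring ℛ = R[X_1, ..., X_s]/⟨t_1(X_1), ..., t_s(X_s)⟩ is isomorphic to a finite direct product of finite commutative chain rings. -/

import Mathlib

open Polynomial

namespace Stmt18

universe u v

/-- In a finite reduced commutative ring, every element is von Neumann regular
(in the weak form we need). -/
lemma exists_mul_self_mul {A : Type*} [CommRing A] [Finite A] [IsReduced A] (a : A) :
    ∃ b, a = a * a * b := by
  obtain ⟨i, j, hij, h⟩ := Finite.exists_ne_map_eq_of_infinite (fun n : ℕ => a ^ (n + 1))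
  wlog hlt : i < j generalizing i j
  · exact this j i hij.symm h.symm (by omega)
  set m := i + 1 with hm
  set e := j - i with he
  have he1 : 1 ≤ e := by omega
  have hme : a ^ m = a ^ (m + e) := by rw [h]; congr 1; omega
  have per1 : ∀ r, m ≤ r → a ^ r = a ^ (r + e) := by
    intro r hr
    have h1 : a ^ r = a ^ (r - m) * a ^ m := by rw [← pow_add]; congr 1; omega
    rw [h1, hme, ← pow_add]; congr 1; omega
  have per : ∀ t r, m ≤ r → a ^ r = a ^ (r + t * e) := by
    intro t
    induction t with
    | zero => simp
    | succ t ih =>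
      intro r hr
      have h1 := per1 (r + t * e) (by omega)
      rw [← ih r hr] at h1
      rw [h1]; congr 1; ring
  obtain ⟨N, hN1, hidem⟩ : ∃ N, 1 ≤ N ∧ a ^ N * a ^ N = a ^ N := by
    have hNm : m ≤ (m + 1) * e := by
      have : m + 1 ≤ (m + 1) * e := Nat.le_mul_of_pos_right _ (by omega)
      omega
    refine ⟨(m + 1) * e, Nat.mul_pos (by omega) (by omega), ?_⟩
    rw [← pow_add]
    exact (per (m + 1) ((m + 1) * e) hNm).symm
  have hc : (1 - a ^ N) * (1 - a ^ N) = 1 - a ^ N := by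
    have h1 : (1 - a ^ N) * (1 - a ^ N) = 1 - a ^ N - (a ^ N - a ^ N * a ^ N) := by ring
    rw [h1, hidem]; ring
  have hpow : ∀ k, (1 - a ^ N) ^ (k + 1) = 1 - a ^ N := by
    intro k
    induction k with
    | zero => simp
    | succ k ih => rw [pow_succ, ih, hc]
  obtain ⟨N', rfl⟩ : ∃ N', N = N' + 1 := ⟨N - 1, by omega⟩
  have hnil : (a * (1 - a ^ (N' + 1))) ^ (N' + 1) = 0 := by
    rw [mul_pow, hpow N']
    have h1 : a ^ (N' + 1) * (1 - a ^ (N' + 1)) =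
        a ^ (N' + 1) - a ^ (N' + 1) * a ^ (N' + 1) := by ring
    rw [h1, hidem, sub_self]
  have hzero : a * (1 - a ^ (N' + 1)) = 0 := IsNilpotent.eq_zero ⟨N' + 1, hnil⟩
  have h2 : a = a * a ^ (N' + 1) := by linear_combination hzero
  refine ⟨a ^ N', ?_⟩
  calc a = a * a ^ (N' + 1) := h2
    _ = a * a * a ^ N' := by rw [pow_succ]; ring

/-- Quotient by a radical ideal is reduced. -/
lemma isReduced_quotient_of_isRadical {A : Type*} [CommRing A] {I : Ideal A}
    (h : I.IsRadical) : IsReduced (A ⧸ I) := by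
  constructor
  intro x hx
  obtain ⟨a, rfl⟩ := Ideal.Quotient.mk_surjective x
  obtain ⟨n, hn⟩ := hx
  rw [← map_pow, Ideal.Quotient.eq_zero_iff_mem] at hn
  exact Ideal.Quotient.eq_zero_iff_mem.mpr (h ⟨n, hn⟩)

/-- A finite local ring whose maximal ideal is principal has linearly ordered ideals. -/
lemma chain_of_principal {C : Type*} [CommRing C] [IsLocalRing C] (π : C) (n : ℕ)
    (hn : π ^ n = 0) (hπ : IsLocalRing.maximalIdeal C = Ideal.span {π}) :
    ∀ I J : Ideal C, I ≤ J ∨ J ≤ I := by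
  have elt : ∀ a : C, a ≠ 0 → ∃ (k : ℕ) (U : Cˣ), a = (U : C) * π ^ k := by
    intro a ha
    have hnk : ∃ k, a ∉ Ideal.span {π ^ k} := by
      refine ⟨n, ?_⟩
      rw [hn]
      intro hmem
      rw [Ideal.span_singleton_eq_bot.mpr rfl] at hmem
      exact ha (Ideal.mem_bot.mp hmem)
    classical
    set k₀ := Nat.find hnk with hk₀
    have hk₀spec : a ∉ Ideal.span {π ^ k₀} := Nat.find_spec hnk
    have hk₀pos : 0 < k₀ := by
      rcases Nat.eq_zero_or_pos k₀ with h0 | h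
      · exfalso
        apply hk₀spec
        rw [h0, pow_zero, Ideal.span_singleton_one]
        exact Submodule.mem_top
      · exact h
    obtain ⟨k₁, hk₁⟩ : ∃ k₁, k₀ = k₁ + 1 := ⟨k₀ - 1, by omega⟩
    have hmem : a ∈ Ideal.span {π ^ k₁} := by
      by_contra hcon
      have hle : k₀ ≤ k₁ := Nat.find_le hcon
      omega
    obtain ⟨b, hb⟩ := Ideal.mem_span_singleton'.mp hmem
    have hbu : IsUnit b := by
      by_contra hbu
      apply hk₀spec
      have hbm : b ∈ IsLocalRing.maximalIdeal C := hbu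
      rw [hπ] at hbm
      obtain ⟨c, hc⟩ := Ideal.mem_span_singleton'.mp hbm
      refine Ideal.mem_span_singleton'.mpr ⟨c, ?_⟩
      rw [hk₁, pow_succ, ← hb, ← hc]
      ring
    obtain ⟨U, hU⟩ := hbu
    exact ⟨k₁, U, by rw [hU, hb]⟩
  intro I J
  by_cases hIJ : I ≤ J
  · exact Or.inl hIJ
  · right
    obtain ⟨x, hxI, hxJ⟩ := SetLike.not_le_iff_exists.mp hIJ
    have hx0 : x ≠ 0 := fun h => hxJ (h ▸ J.zero_mem)
    obtain ⟨k, U, hx⟩ := elt x hx0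
    intro y hyJ
    by_cases hy0 : y = 0
    · rw [hy0]; exact I.zero_mem
    obtain ⟨l, V, hy⟩ := elt y hy0
    rcases le_or_gt k l with hkl | hkl
    · -- y ∈ span {π^l} ⊆ span {π^k} = span {x} ⊆ I
      have hπk : (↑U⁻¹ : C) * x = π ^ k := by
        rw [hx, ← mul_assoc, Units.inv_mul]; ring
      have : y = ((V : C) * π ^ (l - k) * (↑U⁻¹ : C)) * x := by
        calc y = (V : C) * (π ^ (l - k) * π ^ k) := by
              rw [hy, ← pow_add]; congr 2; omega
          _ = ((V : C) * π ^ (l - k) * (↑U⁻¹ : C)) * x := by rw [← hπk]; ring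
      rw [this]
      exact I.mul_mem_left _ hxI
    · exfalso
      apply hxJ
      have hπl : (↑V⁻¹ : C) * y = π ^ l := by
        rw [hy, ← mul_assoc, Units.inv_mul]; ring
      have : x = ((U : C) * π ^ (k - l) * (↑V⁻¹ : C)) * y := by
        calc x = (U : C) * (π ^ (k - l) * π ^ l) := by
              rw [hx, ← pow_add]; congr 2; omega
          _ = ((U : C) * π ^ (k - l) * (↑V⁻¹ : C)) * y := by rw [← hπl]; ring
      rw [this]
      exact J.mul_mem_left _ hyJ

/-- In a finite chain ring the maximal ideal is principal. -/
lemma max_principal (C : Type*) [CommRing C] [Finite C] [IsLocalRing C]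
    (hchain : ∀ I J : Ideal C, I ≤ J ∨ J ≤ I) :
    ∃ π, IsLocalRing.maximalIdeal C = Ideal.span {π} := by
  have hne : ((IsLocalRing.maximalIdeal C : Set C)).Nonempty := ⟨0, Ideal.zero_mem _⟩
  obtain ⟨a, haM, hmax⟩ := Set.Finite.exists_maximalFor
    (fun a : C => (Ideal.span {a} : Ideal C)) _ (Set.toFinite _) hne
  refine ⟨a, le_antisymm ?_ ?_⟩
  · intro b hb
    rcases hchain (Ideal.span {a}) (Ideal.span {b}) with h | h
    · have := hmax hb h
      exact this (Ideal.mem_span_singleton_self b)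
    · exact h (Ideal.mem_span_singleton_self b)
  · rw [Ideal.span_le, Set.singleton_subset_iff]
    exact haM

/-- Transfer of the chain condition along a ring isomorphism. -/
lemma chain_transfer {A B : Type*} [CommRing A] [CommRing B] (e : A ≃+* B)
    (h : ∀ I J : Ideal A, I ≤ J ∨ J ≤ I) : ∀ I J : Ideal B, I ≤ J ∨ J ≤ I := by
  intro I J
  have key : ∀ K L : Ideal B, K.comap (e : A →+* B) ≤ L.comap (e : A →+* B) → K ≤ L := by
    intro K L hKL x hx
    have h1 : e.symm x ∈ K.comap (e : A →+* B) := by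
      rw [Ideal.mem_comap]
      simpa using hx
    have h2 := hKL h1
    rw [Ideal.mem_comap] at h2
    simpa using h2
  rcases h (I.comap (e : A →+* B)) (J.comap (e : A →+* B)) with h' | h'
  · exact Or.inl (key _ _ h')
  · exact Or.inr (key _ _ h')

/-- The conclusion predicate: `A` is a finite product of finite chain rings. -/
def GoodF (A : Type u) [CommRing A] : Prop :=
  ∃ (ι : Type u) (_ : Fintype ι) (C : ι → Type u) (_ : ∀ i, CommRing (C i)),
    (∀ i, Finite (C i)) ∧ (∀ i, Nontrivial (C i)) ∧ (∀ i, IsLocalRing (C i)) ∧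
    (∀ i, ∀ I J : Ideal (C i), I ≤ J ∨ J ≤ I) ∧ Nonempty (A ≃+* ∀ i, C i)

lemma GoodF.of_equiv {A B : Type u} [CommRing A] [CommRing B] (h : GoodF A)
    (e : A ≃+* B) : GoodF B := by
  obtain ⟨ι, fι, C, instC, h1, h2, h3, h4, ⟨e'⟩⟩ := h
  exact ⟨ι, fι, C, instC, h1, h2, h3, h4, ⟨e.symm.trans e'⟩⟩

/-- Currying a product of rings over a sigma type. -/
def ringEquivSigma {ι : Type*} {κ : ι → Type*} (D : ∀ i, κ i → Type*)
    [∀ i j, CommRing (D i j)] :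
    ((p : Σ i, κ i) → D p.1 p.2) ≃+* ∀ i, ∀ j, D i j where
  toFun x i j := x ⟨i, j⟩
  invFun y p := y p.1 p.2
  left_inv x := rfl
  right_inv y := rfl
  map_mul' x y := rfl
  map_add' x y := rfl

lemma GoodF.pi {ι : Type u} [Fintype ι] (C : ι → Type u) [instC : ∀ i, CommRing (C i)]
    (h : ∀ i, GoodF (C i)) : GoodF (∀ i, C i) := by
  choose κ fκ D instD hfin hnt hloc hch hne using h
  letI : ∀ i, Fintype (κ i) := fκ
  letI : ∀ i j, CommRing (D i j) := instD
  have e : ∀ i, C i ≃+* ∀ j, D i j := fun i => (hne i).some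
  refine ⟨Σ i, κ i, inferInstance, fun p => D p.1 p.2, fun p => instD p.1 p.2,
    fun p => hfin p.1 p.2, fun p => hnt p.1 p.2, fun p => hloc p.1 p.2,
    fun p => hch p.1 p.2, ⟨?_⟩⟩
  exact (RingEquiv.piCongrRight e).trans (ringEquivSigma D).symm

/-- The key decomposition: a finite commutative ring `A` with an element `π` that is
nilpotent and such that `A ⧸ (π)` is reduced decomposes as a product of finite chain
rings. -/
lemma decomp_good (A : Type u) [CommRing A] [Finite A] (π : A) (hnil : IsNilpotent π)
    (hred : IsReduced (A ⧸ Ideal.span {π})) : GoodF A := by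
  rcases subsingleton_or_nontrivial A with hsub | hnontriv
  · refine ⟨PEmpty, inferInstance, fun _ => PUnit, fun _ => inferInstance,
      fun _ => inferInstance, fun i => i.elim, fun i => i.elim, fun i => i.elim, ⟨?_⟩⟩
    exact { toFun := fun _ _ => PUnit.unit
            invFun := fun _ => 0
            left_inv := fun a => Subsingleton.elim _ _
            right_inv := fun b => Subsingleton.elim _ _
            map_mul' := fun _ _ => Subsingleton.elim _ _
            map_add' := fun _ _ => Subsingleton.elim _ _ }
  obtain ⟨m, hm⟩ := hnil
  set n := m + 1 with hn
  have hπn : π ^ n = 0 := by rw [hn, pow_succ, hm, zero_mul]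
  have hn0 : n ≠ 0 := by omega
  have hspan : nilradical A = Ideal.span {π} := by
    apply le_antisymm
    · intro x hx
      have h1 : IsNilpotent (Ideal.Quotient.mk (Ideal.span {π}) x) :=
        (mem_nilradical.mp hx).map _
      have h2 := h1.eq_zero
      rwa [Ideal.Quotient.eq_zero_iff_mem] at h2
    · rw [Ideal.span_le, Set.singleton_subset_iff]
      exact mem_nilradical.mpr ⟨n, hπn⟩
  have hNn : (Ideal.span {π} : Ideal A) ^ n = ⊥ := by
    rw [Ideal.span_singleton_pow, hπn, Ideal.span_singleton_eq_bot]
  haveI : Finite (Ideal A) :=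
    Finite.of_injective (fun I : Ideal A => (I : Set A)) SetLike.coe_injective
  haveI fι : Fintype {I : Ideal A // I.IsMaximal} := Fintype.ofFinite _
  set ι := {I : Ideal A // I.IsMaximal} with hι
  -- pairwise coprimality
  have hco : Pairwise fun I J : ι => IsCoprime (I.1 ^ n) (J.1 ^ n) := by
    intro I J hIJ
    exact (Ideal.isCoprime_iff_sup_eq.mpr
      (I.2.coprime_of_ne J.2 (fun heq => hIJ (Subtype.ext heq)))).pow
  -- the infimum of the powers is trivial
  classical
  have hprod : ∀ s : Finset ι,
      ((s : Set ι).Pairwise fun I J : ι => IsCoprime (I.1 ^ n) (J.1 ^ n)) →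
      s.inf (fun I : ι => I.1 ^ n) ≤ ∏ I ∈ s, I.1 ^ n := by
    intro s
    induction s using Finset.induction_on with
    | empty => simp
    | @insert i s hi ih =>
      intro hpw
      have hcop : IsCoprime (i.1 ^ n) (s.inf (fun I : ι => I.1 ^ n)) := by
        rw [Finset.inf_eq_iInf]
        exact Ideal.isCoprime_biInf fun j hj =>
          hpw (Finset.mem_insert_self i s) (Finset.mem_insert_of_mem hj)
            (fun hij => hi (hij ▸ hj))
      rw [Finset.inf_insert, Finset.prod_insert hi,
        Ideal.inf_eq_mul_of_isCoprime hcop]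
      exact Ideal.mul_mono le_rfl (ih (hpw.mono (Finset.coe_subset.mpr
        (Finset.subset_insert i s))))
  have hinf : (⨅ I : ι, I.1 ^ n) = ⊥ := by
    apply le_antisymm _ bot_le
    have step1 : (⨅ I : ι, I.1 ^ n) ≤ Finset.univ.inf (fun I : ι => I.1 ^ n) :=
      Finset.le_inf fun I _ => iInf_le _ I
    have step2 : Finset.univ.inf (fun I : ι => I.1 ^ n) ≤ ∏ I : ι, I.1 ^ n :=
      hprod Finset.univ (hco.set_pairwise _)
    have step3 : (∏ I : ι, I.1 ^ n) = (∏ I : ι, I.1) ^ n := by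
      rw [Finset.prod_pow]
    have step4 : (∏ I : ι, I.1) ≤ Ideal.span {π} := by
      rw [← hspan, nilradical_eq_sInf]
      apply le_sInf
      intro P hP
      haveI : IsArtinianRing A := inferInstance
      have hPmax : P.IsMaximal := (IsArtinianRing.isPrime_iff_isMaximal P).mp hP
      exact le_trans Ideal.prod_le_inf (Finset.inf_le (Finset.mem_univ (⟨P, hPmax⟩ : ι)))
    calc (⨅ I : ι, I.1 ^ n) ≤ ∏ I : ι, I.1 ^ n := le_trans step1 step2
      _ = (∏ I : ι, I.1) ^ n := step3
      _ ≤ (Ideal.span {π}) ^ n := Ideal.pow_right_mono step4 n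
      _ = ⊥ := hNn
  have crt : A ≃+* ∀ I : ι, A ⧸ (I.1 ^ n) :=
    (RingEquiv.quotientBot A).symm.trans ((Ideal.quotEquivOfEq hinf.symm).trans
      (Ideal.quotientInfRingEquivPiQuotient _ hco))
  haveI : Finite (A ⧸ Ideal.span {π}) :=
    Finite.of_surjective _ Ideal.Quotient.mk_surjective
  -- square-root-closed ideals
  have sqcl : ∀ K : Ideal A, Ideal.span {π} ≤ K → ∀ x, x * x ∈ K → x ∈ K := by
    intro K hK x hx
    obtain ⟨b, hb⟩ := exists_mul_self_mul (Ideal.Quotient.mk (Ideal.span {π}) x)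
    obtain ⟨b', rfl⟩ := Ideal.Quotient.mk_surjective b
    have h1 : x - x * x * b' ∈ Ideal.span {π} := by
      rw [← Ideal.Quotient.eq_zero_iff_mem, map_sub, map_mul, map_mul, ← hb, sub_self]
    have h2 : x = (x - x * x * b') + (x * x) * b' := by ring
    rw [h2]
    exact K.add_mem (hK h1) (K.mul_mem_right _ hx)
  have sqrt : ∀ K : Ideal A, Ideal.span {π} ≤ K → ∀ (l : ℕ) (x : A),
      x ^ (2 ^ l) ∈ K → x ∈ K := by
    intro K hK l
    induction l with
    | zero => intro x hx; simpa using hx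
    | succ l ih =>
      intro x hx
      apply ih x
      apply sqcl K hK
      rw [← pow_add]
      have : 2 ^ l + 2 ^ l = 2 ^ (l + 1) := by rw [pow_succ]; ring
      rwa [this]
  -- I = span π ⊔ I ^ n for each maximal I
  have hIeq : ∀ I : ι, I.1 = Ideal.span {π} ⊔ I.1 ^ n := by
    intro I
    apply le_antisymm
    · intro x hx
      apply sqrt _ le_sup_left n
      have h1 : x ^ (2 ^ n) ∈ I.1 ^ (2 ^ n) := Ideal.pow_mem_pow hx _
      have h2 : I.1 ^ (2 ^ n) ≤ I.1 ^ n :=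
        Ideal.pow_le_pow_right (Nat.le_of_lt (Nat.lt_two_pow_self))
      exact Submodule.mem_sup_right (h2 h1)
    · apply sup_le
      · rw [Ideal.span_le, Set.singleton_subset_iff]
        exact I.2.isPrime.mem_of_pow_mem n (by rw [hπn]; exact I.1.zero_mem)
      · exact Ideal.pow_le_self hn0
  -- per-factor facts
  have factor : ∀ I : ι,
      Nontrivial (A ⧸ I.1 ^ n) ∧ IsLocalRing (A ⧸ I.1 ^ n) ∧
      (∀ K L : Ideal (A ⧸ I.1 ^ n), K ≤ L ∨ L ≤ K) := by
    intro I
    set mkh := Ideal.Quotient.mk (I.1 ^ n) with hmkh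
    have hpowne : I.1 ^ n ≠ ⊤ := by
      intro htop
      exact I.2.ne_top (top_le_iff.mp (htop ▸ Ideal.pow_le_self hn0))
    haveI hnt : Nontrivial (A ⧸ I.1 ^ n) := Ideal.Quotient.nontrivial_iff.mpr hpowne
    -- the image of I is maximal
    have hMspan : Ideal.map mkh I.1 = Ideal.span {mkh π} := by
      have h3 := congrArg (Ideal.map mkh) (hIeq I)
      rw [h3, Ideal.map_sup, Ideal.map_span, Set.image_singleton,
        Ideal.map_quotient_self, sup_bot_eq]
    have hqf : IsField ((A ⧸ I.1 ^ n) ⧸ Ideal.map mkh I.1) := by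
      have e2 : ((A ⧸ I.1 ^ n) ⧸ Ideal.map mkh I.1) ≃+* A ⧸ I.1 :=
        (DoubleQuot.quotQuotEquivQuotSup (I.1 ^ n) I.1).trans
          (Ideal.quotEquivOfEq (sup_eq_right.mpr (Ideal.pow_le_self hn0)))
      have hf : IsField (A ⧸ I.1) :=
        (Ideal.Quotient.maximal_ideal_iff_isField_quotient I.1).mp I.2
      haveI : Nontrivial (A ⧸ I.1) := Ideal.Quotient.nontrivial_iff.mpr I.2.ne_top
      rcases hf with ⟨_, hmul, hinv⟩
      refine ⟨⟨e2.symm 0, e2.symm 1, fun h01 => ?_⟩, mul_comm, ?_⟩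
      · exact zero_ne_one (e2.symm.injective (by simpa using h01))
      · intro a ha
        obtain ⟨b, hb⟩ := hinv (a := e2 a) (fun h => ha (by
          have := congrArg e2.symm h
          simpa using this))
        refine ⟨e2.symm b, e2.injective ?_⟩
        rw [map_mul, RingEquiv.apply_symm_apply, hb, map_one]
      
    have hMmax : (Ideal.map mkh I.1).IsMaximal := Ideal.Quotient.maximal_of_isField _ hqf
    haveI hloc : IsLocalRing (A ⧸ I.1 ^ n) := by
      apply IsLocalRing.of_unique_max_ideal
      refine ⟨Ideal.map mkh I.1, hMmax, ?_⟩
      intro M hM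
      have hsurj : Function.Surjective (mkh : A →+* A ⧸ I.1 ^ n) :=
        Ideal.Quotient.mk_surjective
      haveI := hM
      have hcomax : (M.comap (mkh : A →+* A ⧸ I.1 ^ n)).IsMaximal :=
        Ideal.comap_isMaximal_of_surjective _ hsurj
      have hker : I.1 ^ n ≤ M.comap (mkh : A →+* A ⧸ I.1 ^ n) := by
        intro x hx
        rw [Ideal.mem_comap, hmkh, Ideal.Quotient.eq_zero_iff_mem.mpr hx]
        exact M.zero_mem
      have hle : I.1 ≤ M.comap (mkh : A →+* A ⧸ I.1 ^ n) :=
        hcomax.isPrime.le_of_pow_le hker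
      have heq : I.1 = M.comap (mkh : A →+* A ⧸ I.1 ^ n) :=
        I.2.eq_of_le hcomax.ne_top hle
      rw [← Ideal.map_comap_of_surjective _ hsurj M, ← heq]
    have hmaxid : IsLocalRing.maximalIdeal (A ⧸ I.1 ^ n) = Ideal.span {mkh π} := by
      rw [← hMspan]
      exact (IsLocalRing.eq_maximalIdeal hMmax).symm
    refine ⟨hnt, hloc, ?_⟩
    exact chain_of_principal (mkh π) n (by rw [← map_pow, hπn, map_zero]) hmaxid
  refine ⟨ι, fι, fun I => A ⧸ I.1 ^ n, fun I => inferInstance,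
    fun I => Finite.of_surjective (Ideal.Quotient.mk (I.1 ^ n)) Ideal.Quotient.mk_surjective,
    fun I => (factor I).1, fun I => (factor I).2.1, fun I => (factor I).2.2, ⟨crt⟩⟩

/-- Any ring hom from a finite local ring to a field transports squarefreeness of
the residue image. -/
lemma hom_squarefree (R : Type u) [CommRing R] [Finite R] [IsLocalRing R]
    {t : R[X]} (h : Squarefree (t.map (IsLocalRing.residue R)))
    (K : Type v) [Field K] (φ : R →+* K) : Squarefree (t.map φ) := by
  have hker : ∀ a ∈ IsLocalRing.maximalIdeal R, φ a = 0 := by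
    intro a ha
    have hnil : IsNilpotent a := by
      obtain ⟨n, hn⟩ := IsArtinianRing.isNilpotent_jacobson_bot (R := R)
      rw [IsLocalRing.jacobson_eq_maximalIdeal ⊥ bot_ne_top] at hn
      refine ⟨n, ?_⟩
      have := Ideal.pow_mem_pow ha n
      rw [hn] at this
      exact Ideal.mem_bot.mp this
    exact (hnil.map φ).eq_zero
  set ψ : IsLocalRing.ResidueField R →+* K := Ideal.Quotient.lift _ φ hker with hψ
  have hcomp : t.map φ = (t.map (IsLocalRing.residue R)).map ψ := by
    rw [Polynomial.map_map]
    have hc : ψ.comp (IsLocalRing.residue R) = φ := by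
      ext x
      exact Ideal.Quotient.lift_mk (IsLocalRing.maximalIdeal R) φ hker
    rw [hc]
  rw [hcomp]
  haveI : Finite (IsLocalRing.ResidueField R) :=
    Finite.of_surjective _ Ideal.Quotient.mk_surjective
  have hsep : (t.map (IsLocalRing.residue R)).Separable :=
    PerfectField.separable_iff_squarefree.mpr h
  exact (hsep.map).squarefree

/-- Quotient of a finite product by the span of an element is the product of the
quotients by the components. -/
lemma pi_quot_span {ι : Type u} (P : ι → Type v) [∀ i, CommRing (P i)] (v : ∀ i, P i) :
    Nonempty (((∀ i, P i) ⧸ Ideal.span {v}) ≃+* ∀ i, P i ⧸ Ideal.span {v i}) := by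
  set f : (∀ i, P i) →+* ∀ i, P i ⧸ Ideal.span {v i} :=
    Pi.ringHom fun i => (Ideal.Quotient.mk (Ideal.span {v i})).comp (Pi.evalRingHom P i)
    with hf
  have hsurj : Function.Surjective f := by
    intro y
    have : ∀ i, ∃ x, Ideal.Quotient.mk (Ideal.span {v i}) x = y i :=
      fun i => Ideal.Quotient.mk_surjective (y i)
    choose x hx using this
    exact ⟨x, funext hx⟩
  have hker : RingHom.ker f = Ideal.span {v} := by
    ext x
    rw [RingHom.mem_ker]
    constructor
    · intro hx
      have hx' : ∀ i, x i ∈ Ideal.span {v i} := by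
        intro i
        have := congrFun hx i
        exact Ideal.Quotient.eq_zero_iff_mem.mp this
      have : ∀ i, ∃ c, c * v i = x i := fun i => Ideal.mem_span_singleton'.mp (hx' i)
      choose c hc using this
      exact Ideal.mem_span_singleton'.mpr ⟨c, funext hc⟩
    · intro hx
      obtain ⟨c, hc⟩ := Ideal.mem_span_singleton'.mp hx
      funext i
      have : x i = c i * v i := by rw [← hc]; rfl
      show Ideal.Quotient.mk (Ideal.span {v i}) (x i) = 0
      rw [Ideal.Quotient.eq_zero_iff_mem, this]
      exact Ideal.mul_mem_left _ _ (Ideal.mem_span_singleton_self _)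
  exact ⟨(Ideal.quotEquivOfEq hker.symm).trans (RingHom.quotientKerEquivOfSurjective hsurj)⟩

/-- Adjoining a root of a monic polynomial with squarefree residue images to a finite
chain ring produces a product of finite chain rings. -/
lemma adjoin_good (C : Type u) [CommRing C] [Finite C] [IsLocalRing C]
    (hch : ∀ I J : Ideal C, I ≤ J ∨ J ≤ I) (u : C[X]) (hu : u.Monic)
    (hsq : ∀ (K : Type u) [Field K] (φ : C →+* K), Squarefree (u.map φ)) :
    GoodF (C[X] ⧸ Ideal.span {u}) := by
  obtain ⟨π₀, hπ₀⟩ := max_principal C hch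
  haveI : Module.Finite C (AdjoinRoot u) :=
    Module.Finite.of_basis (AdjoinRoot.powerBasis' hu).basis
  haveI hfinA : Finite (AdjoinRoot u) := Module.finite_of_finite C
  -- nilpotency of π₀
  have hπ₀m : π₀ ∈ IsLocalRing.maximalIdeal C := by
    rw [hπ₀]; exact Ideal.mem_span_singleton_self _
  have hπ₀nil : IsNilpotent π₀ := by
    obtain ⟨n, hn⟩ := IsArtinianRing.isNilpotent_jacobson_bot (R := C)
    rw [IsLocalRing.jacobson_eq_maximalIdeal ⊥ bot_ne_top] at hn
    refine ⟨n, ?_⟩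
    have := Ideal.pow_mem_pow hπ₀m n
    rw [hn] at this
    exact Ideal.mem_bot.mp this
  set π : AdjoinRoot u := AdjoinRoot.of u π₀ with hπdef
  have hπnil : IsNilpotent π := hπ₀nil.map (AdjoinRoot.of u)
  -- reducedness of the quotient by π
  letI : Field (C ⧸ IsLocalRing.maximalIdeal C) := Ideal.Quotient.field _
  have hsq' : Squarefree (u.map (Ideal.Quotient.mk (IsLocalRing.maximalIdeal C))) :=
    hsq _ (Ideal.Quotient.mk (IsLocalRing.maximalIdeal C))
  have hrad : (Ideal.span {u.map (Ideal.Quotient.mk (IsLocalRing.maximalIdeal C))} :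
      Ideal (C ⧸ IsLocalRing.maximalIdeal C)[X]).IsRadical := by
    intro x hx
    obtain ⟨k, hk⟩ := hx
    rw [Ideal.mem_span_singleton] at hk ⊢
    exact hsq'.isRadical k x hk
  have e3 : (AdjoinRoot u ⧸ Ideal.span {π}) ≃+*
      ((C ⧸ IsLocalRing.maximalIdeal C)[X] ⧸
        Ideal.span {u.map (Ideal.Quotient.mk (IsLocalRing.maximalIdeal C))}) := by
    have hspan : (Ideal.span {π} : Ideal (AdjoinRoot u)) =
        (IsLocalRing.maximalIdeal C).map (AdjoinRoot.of u) := by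
      rw [hπ₀, Ideal.map_span, Set.image_singleton]
    exact (Ideal.quotEquivOfEq hspan).trans
      (AdjoinRoot.quotAdjoinRootEquivQuotPolynomialQuot _ u)
  have hredA : IsReduced (AdjoinRoot u ⧸ Ideal.span {π}) := by
    haveI := isReduced_quotient_of_isRadical hrad
    constructor
    intro x hx
    have : IsNilpotent (e3 x) := hx.map e3
    have h0 := this.eq_zero
    apply e3.injective
    rw [h0, map_zero]
  exact decomp_good (AdjoinRoot u) π hπnil hredA

/-- If `A` is a product of finite chain rings and `u` is monic over `A` with squarefree
image under every hom into a field, then `A[X]/(u)` is again such a product. -/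
lemma quot_poly_good (A : Type u) [CommRing A] (hA : GoodF A) (u : A[X]) (hu : u.Monic)
    (hsq : ∀ (K : Type u) [Field K] (φ : A →+* K), Squarefree (u.map φ)) :
    GoodF (A[X] ⧸ Ideal.span {u}) := by
  obtain ⟨ι, fι, C, instC, hfin, hnt, hloc, hch, ⟨e⟩⟩ := hA
  letI := fι
  letI := instC
  haveI : ∀ i, Finite (C i) := hfin
  haveI : ∀ i, IsLocalRing (C i) := hloc
  set E : A[X] ≃+* ∀ i, (C i)[X] :=
    (Polynomial.mapEquiv e).trans (Polynomial.piEquiv C) with hE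
  set φ : ∀ i, A →+* C i := fun i => (Pi.evalRingHom C i).comp (e : A →+* ∀ i, C i)
    with hφ
  have hEu : E u = fun i => u.map (φ i) := by
    funext i
    show (Polynomial.piEquiv C) ((Polynomial.mapEquiv e) u) i = u.map (φ i)
    rw [Polynomial.mapEquiv_apply]
    show ((u.map (e : A →+* ∀ i, C i)).map (Pi.evalRingHom C i)) = u.map (φ i)
    rw [Polynomial.map_map]
  have q1 : (A[X] ⧸ Ideal.span {u}) ≃+* (∀ i, (C i)[X]) ⧸ Ideal.span {E u} :=
    Ideal.quotientEquiv _ _ E (by rw [Ideal.map_span, Set.image_singleton]; rfl)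
  obtain ⟨q2⟩ := pi_quot_span (fun i => (C i)[X]) (E u)
  have hgood : ∀ i, GoodF ((C i)[X] ⧸ Ideal.span {E u i}) := by
    intro i
    have : E u i = u.map (φ i) := by rw [hEu]
    rw [this]
    refine adjoin_good (C i) (hch i) (u.map (φ i)) (hu.map _) ?_
    intro K _ ψ
    rw [Polynomial.map_map]
    exact hsq K (ψ.comp (φ i))
  have := GoodF.pi (fun i => (C i)[X] ⧸ Ideal.span {E u i}) hgood
  exact this.of_equiv (q1.trans q2).symm

lemma maxIdeal_nilpotent {R : Type*} [CommRing R] [Finite R] [IsLocalRing R]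
    {π : R} (hπ : π ∈ IsLocalRing.maximalIdeal R) : IsNilpotent π := by
  obtain ⟨n, hn⟩ := IsArtinianRing.isNilpotent_jacobson_bot (R := R)
  rw [IsLocalRing.jacobson_eq_maximalIdeal ⊥ bot_ne_top] at hn
  refine ⟨n, ?_⟩
  have h1 := Ideal.pow_mem_pow hπ n
  rw [hn] at h1
  exact Ideal.mem_bot.mp h1

lemma aeval_X_poly {R S : Type*} [CommRing R] [CommRing S] [Algebra R S] (p : R[X]) :
    (Polynomial.aeval (Polynomial.X : S[X])) p = p.map (algebraMap R S) := by
  have h : (Polynomial.aeval (Polynomial.X : S[X]) : R[X] →ₐ[R] S[X])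
      = Polynomial.mapAlgHom (Algebra.ofId R S) := by
    apply Polynomial.algHom_ext
    simp
  rw [h]
  rfl

set_option maxHeartbeats 1000000 in
set_option synthInstance.maxHeartbeats 400000 in
lemma main_good (R : Type u) [CommRing R] [Finite R] [IsLocalRing R]
    (hchain : ∀ I J : Ideal R, I ≤ J ∨ J ≤ I) :
    ∀ (s : ℕ) (t : Fin s → R[X]), (∀ i, (t i).Monic) →
      (∀ i, Squarefree ((t i).map (IsLocalRing.residue R))) →
      GoodF (MvPolynomial (Fin s) R ⧸
        Ideal.span (Set.range fun i => (Polynomial.aeval (MvPolynomial.X i) (t i) :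
          MvPolynomial (Fin s) R))) := by
  intro s
  induction s with
  | zero =>
    intro t hmon hsq
    have hbot : Ideal.span (Set.range fun i : Fin 0 =>
        (Polynomial.aeval (MvPolynomial.X i) (t i) : MvPolynomial (Fin 0) R)) = ⊥ := by
      rw [Set.range_eq_empty, Ideal.span_empty]
    have e0 : (MvPolynomial (Fin 0) R ⧸
        Ideal.span (Set.range fun i : Fin 0 =>
          (Polynomial.aeval (MvPolynomial.X i) (t i) : MvPolynomial (Fin 0) R))) ≃+* R :=
      (Ideal.quotEquivOfEq hbot).trans ((RingEquiv.quotientBot _).trans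
        (MvPolynomial.isEmptyRingEquiv R (Fin 0)))
    obtain ⟨π, hπ⟩ := max_principal R hchain
    have hπnil : IsNilpotent π :=
      maxIdeal_nilpotent (π := π) (by rw [hπ]; exact Ideal.mem_span_singleton_self _)
    have hred : IsReduced (R ⧸ Ideal.span {π}) := by
      apply isReduced_quotient_of_isRadical
      rw [← hπ]
      exact (IsLocalRing.maximalIdeal.isMaximal R).isPrime.isRadical
    exact (decomp_good R π hπnil hred).of_equiv e0.symm
  | succ s ih =>
    intro t hmon hsq
    set Mv := MvPolynomial (Fin s) R with hMv
    set P := Polynomial Mv with hP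
    set e₁ : MvPolynomial (Fin (s + 1)) R ≃+* P :=
      (MvPolynomial.finSuccEquiv R s).toRingEquiv with he₁
    set g : Fin (s + 1) → MvPolynomial (Fin (s + 1)) R :=
      fun i => Polynomial.aeval (MvPolynomial.X i) (t i) with hg
    set g' : Fin s → Mv := fun i => Polynomial.aeval (MvPolynomial.X i) (t i.succ) with hg'
    set K : Ideal Mv := Ideal.span (Set.range g') with hK
    set T₀ : P := (t 0).map (algebraMap R Mv) with hT₀
    have hgen0 : e₁ (g 0) = T₀ := by
      show (MvPolynomial.finSuccEquiv R s) (Polynomial.aeval (MvPolynomial.X 0) (t 0)) = T₀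
      rw [← Polynomial.aeval_algHom_apply, MvPolynomial.finSuccEquiv_X_zero]
      exact aeval_X_poly (t 0)
    have hgens : ∀ i : Fin s, e₁ (g i.succ) = Polynomial.C (g' i) := by
      intro i
      show (MvPolynomial.finSuccEquiv R s)
        (Polynomial.aeval (MvPolynomial.X i.succ) (t i.succ)) = Polynomial.C (g' i)
      rw [← Polynomial.aeval_algHom_apply, MvPolynomial.finSuccEquiv_X_succ]
      exact Polynomial.aeval_algHom_apply
        (Polynomial.CAlgHom (R := R) (A := Mv)) (MvPolynomial.X i) (t i.succ)
    have hmap : Ideal.map (e₁ : MvPolynomial (Fin (s + 1)) R →+* P)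
        (Ideal.span (Set.range g)) = Ideal.map Polynomial.C K ⊔ Ideal.span {T₀} := by
      rw [Ideal.map_span, ← Set.range_comp]
      have hco : ⇑((e₁ : MvPolynomial (Fin (s + 1)) R ≃+* P) :
          MvPolynomial (Fin (s + 1)) R →+* P) = ⇑e₁ := rfl
      rw [hco]
      have hr : Set.range (⇑e₁ ∘ g) = insert T₀ (Polynomial.C '' Set.range g') := by
        rw [Fin.range_fin_succ]
        have h0 : (⇑e₁ ∘ g) 0 = T₀ := hgen0
        have ht : Fin.tail (⇑e₁ ∘ g) = Polynomial.C ∘ g' := by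
          funext i
          exact hgens i
        rw [h0, ht, Set.range_comp]
      rw [hr, Ideal.span_insert, ← Ideal.map_span]
      exact sup_comm _ _
    set w : (Mv ⧸ K)[X] := (t 0).map ((Ideal.Quotient.mk K).comp (algebraMap R Mv)) with hw
    have q1 : (MvPolynomial (Fin (s + 1)) R ⧸ Ideal.span (Set.range g)) ≃+*
        P ⧸ (Ideal.map Polynomial.C K ⊔ Ideal.span {T₀}) :=
      Ideal.quotientEquiv _ _ e₁ hmap.symm
    have q2 : (P ⧸ (Ideal.map Polynomial.C K ⊔ Ideal.span {T₀})) ≃+*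
        ((P ⧸ Ideal.map Polynomial.C K) ⧸
          (Ideal.span {T₀}).map (Ideal.Quotient.mk (Ideal.map Polynomial.C K))) :=
      (DoubleQuot.quotQuotEquivQuotSup _ _).symm
    have hq4span : Ideal.span {w} =
        ((Ideal.span {T₀}).map (Ideal.Quotient.mk (Ideal.map Polynomial.C K))).map
          ((Ideal.polynomialQuotientEquivQuotientPolynomial K).symm :
            (P ⧸ Ideal.map Polynomial.C K) →+* (Mv ⧸ K)[X]) := by
      have hx : (Ideal.polynomialQuotientEquivQuotientPolynomial K).symm
          (Ideal.Quotient.mk (Ideal.map Polynomial.C K) T₀) = w := by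
        rw [Ideal.polynomialQuotientEquivQuotientPolynomial_symm_mk, hT₀, Polynomial.map_map]
      have h1 : Ideal.map (Ideal.Quotient.mk (Ideal.map Polynomial.C K)) (Ideal.span {T₀})
          = Ideal.span {Ideal.Quotient.mk (Ideal.map Polynomial.C K) T₀} := by
        rw [Ideal.map_span (Ideal.Quotient.mk (Ideal.map Polynomial.C K)) {T₀},
          Set.image_singleton]
      rw [h1, Ideal.map_span, Set.image_singleton,
        show (↑K.polynomialQuotientEquivQuotientPolynomial.symm :
            (P ⧸ Ideal.map Polynomial.C K) →+* (Mv ⧸ K)[X])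
          ((Ideal.Quotient.mk (Ideal.map Polynomial.C K)) T₀) = w from hx]
    letI tB : CommRing ((Mv ⧸ K)[X]) := Polynomial.commRing
    have q4 : ((P ⧸ Ideal.map Polynomial.C K) ⧸
          (Ideal.span {T₀}).map (Ideal.Quotient.mk (Ideal.map Polynomial.C K))) ≃+*
        ((Mv ⧸ K)[X] ⧸ Ideal.span {w}) :=
      Ideal.quotientEquiv _ _ (Ideal.polynomialQuotientEquivQuotientPolynomial K).symm
        hq4span
    have hGA : GoodF (Mv ⧸ K) :=
      ih (fun i => t i.succ) (fun i => hmon i.succ) (fun i => hsq i.succ)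
    have hGW : GoodF ((Mv ⧸ K)[X] ⧸ Ideal.span {w}) := by
      refine quot_poly_good _ hGA w ((hmon 0).map _) ?_
      intro Kf _ ψ
      rw [hw, Polynomial.map_map]
      exact hom_squarefree R (hsq 0) Kf _
    exact hGW.of_equiv (q1.trans (q2.trans q4)).symm

end Stmt18

theorem stmt_18 (R : Type*) [CommRing R] [Fintype R] [IsLocalRing R]
    (hchain : ∀ I J : Ideal R, I ≤ J ∨ J ≤ I)
    (s : ℕ) (t : Fin s → R[X]) (hmonic : ∀ i, (t i).Monic)
    (hsqf : ∀ i, Squarefree ((t i).map (IsLocalRing.residue R))) :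
    ∃ (k : ℕ) (C : Fin k → Type) (inst : ∀ j, CommRing (C j)),
      (∀ j, Finite (C j)) ∧
      (∀ j, Nontrivial (C j)) ∧
      (∀ j, IsLocalRing (C j)) ∧
      (∀ j, ∀ I J : Ideal (C j), I ≤ J ∨ J ≤ I) ∧
      Nonempty
        ((MvPolynomial (Fin s) R ⧸
            Ideal.span (Set.range fun i => (Polynomial.aeval (MvPolynomial.X i) (t i) : MvPolynomial (Fin s) R)))
          ≃+* ∀ j, C j) := by
  have hG := Stmt18.main_good R hchain s t hmonic hsqf
  obtain ⟨ι, fι, C, instC, hfin, hnt, hloc, hch, ⟨e⟩⟩ := hG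
  letI := fι
  letI := instC
  haveI : ∀ i, Finite (C i) := hfin
  set k := Fintype.card ι with hk
  set σ : Fin k ≃ ι := (Fintype.equivFin ι).symm with hσ
  letI : ∀ i, Small.{0} (C i) := fun i => inferInstance
  let D : Fin k → Type := fun j => Shrink.{0} (C (σ j))
  letI instD : ∀ j, CommRing (D j) := fun j => inferInstance
  have eDr : ∀ j, D j ≃+* C (σ j) := fun j => by
    exact ((equivShrink (C (σ j))).symm.ringEquiv)
  refine ⟨k, D, instD, ?_, ?_, ?_, ?_, ⟨?_⟩⟩
  · intro j
    exact Finite.of_equiv _ ((equivShrink (C (σ j))) : C (σ j) ≃ D j)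
  · intro j
    haveI := hnt (σ j)
    exact (((equivShrink (C (σ j))) : C (σ j) ≃ D j)).symm.nontrivial
  · intro j
    haveI := hloc (σ j)
    haveI : Nontrivial (D j) := by
      haveI := hnt (σ j)
      exact (((equivShrink (C (σ j))) : C (σ j) ≃ D j)).symm.nontrivial
    exact IsLocalRing.of_surjective' ((eDr j).symm : C (σ j) →+* D j) (eDr j).symm.surjective
  · intro j
    exact Stmt18.chain_transfer (eDr j).symm (hch (σ j))
  · exact e.trans ((RingEquiv.piCongrLeft C σ).symm.trans
      (RingEquiv.piCongrRight fun j => (eDr j).symm))
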